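/- For the Gårding cone Γₖ⁺ = {λ ∈ ℝⁿ : σⱼ(λ) > 0 for all 1 ≤ j ≤ k}, one has μ_{Γₖ⁺}⁺ = (n−k)/k, i.e., the vector (−(n−k)/k, 1, …, 1) lies on the boundary of Γₖ⁺. -/

import Mathlib

open Finset

/-- The j-th elementary symmetric polynomial in n variables. -/
def esymm (n j : ℕ) (x : Fin n → ℝ) : ℝ :=
  ∑ s ∈ Finset.univ.powersetCard j, ∏ i ∈ s, x i

/-- The Gårding cone Γₖ⁺ ⊂ ℝⁿ. -/
def gardingCone (n k : ℕ) : Set (Fin n → ℝ) :=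
  {x | ∀ j : ℕ, 1 ≤ j → j ≤ k → 0 < esymm n j x}

/-- μ_{Γₖ⁺}⁺ = (n−k)/k, i.e. (−(n−k)/k, 1, …, 1) ∈ ∂Γₖ⁺. -/
lemma esymm_val (n j : ℕ) (hn : 0 < n) (hj : 1 ≤ j) (t : ℝ) :
    esymm n j (fun i : Fin n => if (i : ℕ) = 0 then t else 1)
      = t * ((n-1).choose (j-1)) + ((n-1).choose j) := by
  obtain ⟨m, rfl⟩ : ∃ m, n = m + 1 := ⟨n - 1, by omega⟩
  obtain ⟨l, rfl⟩ : ∃ l, j = l + 1 := ⟨j - 1, by omega⟩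
  set z : Fin (m+1) := ⟨0, hn⟩
  unfold esymm
  have h0 : ∀ s : Finset (Fin (m+1)), (∏ i ∈ s, if (i : ℕ) = 0 then t else 1)
      = if z ∈ s then t else 1 := by
    intro s
    rw [← Finset.prod_ite_eq' s z (fun _ => t)]
    exact Finset.prod_congr rfl fun i _ => by simp only [Fin.ext_iff, z]
  simp_rw [h0]
  rw [Finset.sum_ite, Finset.sum_const, Finset.sum_const]
  have hc2 : ((univ.powersetCard (l+1)).filter (fun s => ¬ z ∈ s)).card = m.choose (l+1) := by
    have he : (univ.powersetCard (l+1)).filter (fun s => ¬ z ∈ s)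
        = (univ.erase z).powersetCard (l+1) := by
      ext s
      simp [Finset.mem_powersetCard, Finset.subset_erase]
      tauto
    rw [he, Finset.card_powersetCard]
    simp [Finset.card_erase_of_mem]
  have hc1 : ((univ.powersetCard (l+1)).filter (fun s => z ∈ s)).card = m.choose l := by
    have htot : ((univ.powersetCard (l+1)).filter (fun s => z ∈ s)).card
        + ((univ.powersetCard (l+1)).filter (fun s => ¬ z ∈ s)).card
        = (m+1).choose (l+1) := by
      have := Finset.card_filter_add_card_filter_not
        (s := univ.powersetCard (l+1)) (p := fun s => z ∈ s)
      simpa using this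
    rw [hc2] at htot
    simp only [Nat.choose_succ_succ, Nat.succ_eq_add_one] at htot
    omega
  rw [hc1, hc2]
  simp [mul_comm]

theorem stmt1 (n k : ℕ) (hn : 3 ≤ n) (hk1 : 1 ≤ k) (hkn : k ≤ n) :
    (fun i : Fin n => if (i : ℕ) = 0 then -(((n : ℝ) - k) / k) else 1) ∈
      frontier (gardingCone n k) := by
  set t : ℝ := -(((n : ℝ) - k) / k) with ht
  clear_value t
  have hk0 : (0:ℝ) < k := by exact_mod_cast hk1
  -- ratio identity for choose
  have hcj : ∀ j : ℕ, 1 ≤ j → j ≤ n →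
      ((n-1).choose j : ℝ) * j = ((n-1).choose (j-1) : ℝ) * ((n:ℝ) - j) := by
    intro j hj1 hjn
    have h := Nat.choose_succ_right_eq (n-1) (j-1)
    have h1 : j - 1 + 1 = j := by omega
    have h2 : n - 1 - (j - 1) = n - j := by omega
    rw [h1, h2] at h
    have := congrArg (fun x : ℕ => (x : ℝ)) h
    push_cast [Nat.cast_sub hjn] at this
    linarith [this]
  -- value of esymm at the vector
  have hval : ∀ j : ℕ, 1 ≤ j → j ≤ n →
      esymm n j (fun i : Fin n => if (i : ℕ) = 0 then t else 1)
        = ((n-1).choose (j-1) : ℝ) * n * ((k:ℝ) - j) / (j * k) := by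
    intro j hj1 hjn
    rw [esymm_val n j (by omega) hj1]
    have hj0 : (0:ℝ) < j := by exact_mod_cast hj1
    have hc := hcj j hj1 hjn
    subst ht
    field_simp
    ring_nf
    ring_nf at hc
    nlinarith [hc]
  have hchoose_pos : ∀ j : ℕ, 1 ≤ j → j ≤ n → (0:ℝ) < ((n-1).choose (j-1) : ℝ) := by
    intro j hj1 hjn
    exact_mod_cast Nat.choose_pos (by omega)
  -- nonnegativity at the point, for j ≤ k
  have hge : ∀ j : ℕ, 1 ≤ j → j ≤ k →
      0 ≤ esymm n j (fun i : Fin n => if (i : ℕ) = 0 then t else 1) := by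
    intro j hj1 hjk
    rw [hval j hj1 (le_trans hjk hkn)]
    have hj0 : (0:ℝ) < j := by exact_mod_cast hj1
    have : (0:ℝ) ≤ (k:ℝ) - j := by
      have : (j:ℝ) ≤ k := by exact_mod_cast hjk
      linarith
    positivity
  -- zero at j = k
  have hzero : esymm n k (fun i : Fin n => if (i : ℕ) = 0 then t else 1) = 0 := by
    rw [hval k hk1 hkn]; simp
  rw [frontier, Set.mem_diff]
  constructor
  · -- in closure: approximate from inside
    have hmem : ∀ m : ℕ,
        (fun i : Fin n => if (i : ℕ) = 0 then t + 1/(m+1) else 1) ∈ gardingCone n k := by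
      intro m j hj1 hjk
      rw [esymm_val n j (by omega) hj1]
      have h1 := hge j hj1 hjk
      rw [esymm_val n j (by omega) hj1] at h1
      have h2 := hchoose_pos j hj1 (le_trans hjk hkn)
      have h3 : (0:ℝ) < 1/((m:ℝ)+1) := by positivity
      have hring : (t + 1/((m:ℝ)+1)) * (((n-1).choose (j-1) : ℕ) : ℝ) + (((n-1).choose j : ℕ) : ℝ)
          = (t * (((n-1).choose (j-1) : ℕ) : ℝ) + (((n-1).choose j : ℕ) : ℝ))
            + (1/((m:ℝ)+1)) * (((n-1).choose (j-1) : ℕ) : ℝ) := by ring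
      push_cast at hring h1 ⊢
      rw [hring]
      have h4 := mul_pos h3 h2
      linarith
    have htend : Filter.Tendsto
        (fun m : ℕ => (fun i : Fin n => if (i : ℕ) = 0 then t + 1/(m+1) else 1))
        Filter.atTop (nhds (fun i : Fin n => if (i : ℕ) = 0 then t else 1)) := by
      rw [tendsto_pi_nhds]
      intro i
      by_cases h : (i:ℕ) = 0
      · simp only [h, if_true]
        have := tendsto_one_div_add_atTop_nhds_zero_nat (𝕜 := ℝ)
        have h2 := this.const_add t
        simpa using h2
      · simp only [h, if_false]
        exact tendsto_const_nhds
    exact mem_closure_of_tendsto htend (Filter.Eventually.of_forall hmem)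
  · -- not in interior
    intro hint
    have hmem := interior_subset hint
    have := hmem k hk1 (le_refl k)
    rw [hzero] at this
    exact lt_irrefl 0 this
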